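/- Let r ≥ 4 be an integer and let (R, m) be a finite commutative local ring having exactly r nontrivial ideals. If the characteristic of the residue field R/m is a prime p with p ≥ r − 1, then every ideal of R is principal (R is a PIR). -/

import Mathlib

open IsLocalRing

lemma aux_pir_of_principal_max (R : Type*) [CommRing R] [IsLocalRing R] [Finite R]
    (h : (IsLocalRing.maximalIdeal R).IsPrincipal) : IsPrincipalIdealRing R := by
  obtain ⟨t, ht⟩ := h
  rw [Ideal.submodule_span_eq] at ht
  have hA : IsArtinianRing R := inferInstance
  obtain ⟨N, hN⟩ : IsNilpotent (IsLocalRing.maximalIdeal R) := by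
    have := IsArtinianRing.isNilpotent_jacobson_bot (R := R)
    rwa [IsLocalRing.jacobson_eq_maximalIdeal ⊥ bot_ne_top] at this
  classical
  constructor
  intro I
  by_cases hI : I = ⊥
  · exact hI ▸ ⟨0, Ideal.span_zero.symm⟩
  have hex : ∃ n, ¬ I ≤ (maximalIdeal R) ^ n := by
    refine ⟨N, ?_⟩
    rw [hN]
    simpa [le_bot_iff] using hI
  set n := Nat.find hex with hn
  have hnle : ¬ I ≤ (maximalIdeal R) ^ n := Nat.find_spec hex
  have hn0 : n ≠ 0 := by
    intro h0
    exact hnle (by rw [h0, pow_zero, Ideal.one_eq_top]; exact le_top)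
  have hle : I ≤ (maximalIdeal R) ^ (n - 1) := by
    by_contra hc
    exact (Nat.find_min hex (by omega)) hc
  obtain ⟨x, hxI, hxn⟩ : ∃ x ∈ I, x ∉ (maximalIdeal R) ^ n := SetLike.not_le_iff_exists.mp hnle
  have hx' : x ∈ Ideal.span {t ^ (n - 1)} := by
    rw [← Ideal.span_singleton_pow, ← ht]; exact hle hxI
  obtain ⟨a, ha⟩ := Ideal.mem_span_singleton'.mp hx'
  have hn' : n - 1 + 1 = n := by omega
  have hau : IsUnit a := by
    by_contra hau
    apply hxn
    have htm : t ∈ maximalIdeal R := by rw [ht]; exact Ideal.mem_span_singleton_self t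
    have : x ∈ maximalIdeal R * (maximalIdeal R) ^ (n - 1) := by
      rw [← ha]
      exact Ideal.mul_mem_mul hau (by
        rw [ht, Ideal.span_singleton_pow]
        exact Ideal.mem_span_singleton_self _)
    rwa [← pow_succ', hn'] at this
  obtain ⟨u, rfl⟩ := hau
  have htI : t ^ (n - 1) ∈ I := by
    have h1 : (↑u⁻¹ : R) * x ∈ I := I.mul_mem_left _ hxI
    rwa [← ha, ← mul_assoc, Units.inv_mul, one_mul] at h1
  refine ⟨t ^ (n - 1), le_antisymm ?_ ?_⟩
  · rw [Ideal.submodule_span_eq, ← Ideal.span_singleton_pow, ← ht]; exact hle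
  · exact (Ideal.span_singleton_le_iff_mem I).mpr htI

set_option maxHeartbeats 1000000 in
/-- If `(R, m)` is a finite commutative local ring with exactly `r ≥ 4` nontrivial
ideals and the characteristic `p` of the residue field `R/m` satisfies `p ≥ r − 1`,
then every ideal of `R` is principal. -/
theorem finite_local_ring_isPrincipalIdealRing_of_large_residue_char
    (r p : ℕ) (hr : 4 ≤ r) (hp : p.Prime)
    (R : Type*) [CommRing R] [IsLocalRing R] [Finite R]
    [CharP (IsLocalRing.ResidueField R) p]
    (hcard : Nat.card {I : Ideal R // I ≠ ⊥ ∧ I ≠ ⊤} = r)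
    (hpr : r - 1 ≤ p) :
    IsPrincipalIdealRing R := by
  classical
  have hfinI : Finite (Ideal R) :=
    Finite.of_injective (fun I : Ideal R => (I : Set R)) SetLike.coe_injective
  apply aux_pir_of_principal_max
  by_contra hprin
  set k := ResidueField R with hk
  set V := CotangentSpace R with hV
  have h2 : 2 ≤ Module.finrank k V := by
    show 2 ≤ Module.finrank (ResidueField R) (CotangentSpace R)
    by_contra hc
    exact hprin (finrank_cotangentSpace_le_one_iff.mp (by omega))
  let b := Module.finBasis k V
  set v₀ : V := b ⟨0, by omega⟩ with hv₀
  set v₁ : V := b ⟨1, by omega⟩ with hv₁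
  -- linear independence of the pair (v₀, v₁)
  have hind : ∀ a c : k, a • v₀ + c • v₁ = 0 → a = 0 ∧ c = 0 := by
    have hf : Function.Injective
        (fun i : Fin 2 => (⟨(i : ℕ), by omega⟩ : Fin (Module.finrank k V))) := by
      intro i j hij
      have h' := congrArg Fin.val hij
      exact Fin.ext h'
    have li2 := b.linearIndependent.comp _ hf
    intro a c hac
    have h0 := Fintype.linearIndependent_iff.mp li2 ![a, c] (by
      rw [Fin.sum_univ_two]
      simpa using hac)
    exact ⟨h0 0, h0 1⟩
  set π := (maximalIdeal R).toCotangent with hπ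
  obtain ⟨x, hx⟩ := (maximalIdeal R).toCotangent_surjective v₀
  obtain ⟨y, hy⟩ := (maximalIdeal R).toCotangent_surjective v₁
  have hsm : ∀ (c : R) (v : V), c • v = IsLocalRing.residue R c • v := by
    intro c v
    rw [← IsLocalRing.ResidueField.algebraMap_eq, algebraMap_smul]
  -- key membership lemma
  have key : ∀ w z : maximalIdeal R,
      (z : R) ∈ (maximalIdeal R) ^ 2 ⊔ Ideal.span {(w : R)} →
      ∃ c : k, π z = c • π w := by
    intro w z hz
    obtain ⟨u, hu, v, hv, huv⟩ := Submodule.mem_sup.mp hz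
    obtain ⟨c, rfl⟩ := Ideal.mem_span_singleton'.mp hv
    refine ⟨IsLocalRing.residue R c, ?_⟩
    have hum : u ∈ maximalIdeal R := (Ideal.pow_le_self two_ne_zero) hu
    have hz' : z = ⟨u, hum⟩ + c • w := by
      apply Subtype.ext
      simp only [Submodule.coe_add, SetLike.val_smul, smul_eq_mul]
      exact huv.symm
    have h0 : π ⟨u, hum⟩ = 0 := (Ideal.toCotangent_eq_zero _ _).mpr hu
    rw [hz', map_add, h0, zero_add, map_smul, hsm]
  -- the family of ideals
  set J : R → Ideal R := fun a =>
    (maximalIdeal R) ^ 2 ⊔ Ideal.span {((x + a • y : maximalIdeal R) : R)} with hJ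
  set Jy : Ideal R := (maximalIdeal R) ^ 2 ⊔ Ideal.span {(y : R)} with hJy
  have hπw : ∀ a : R, π (x + a • y) = v₀ + IsLocalRing.residue R a • v₁ := by
    intro a
    rw [map_add, map_smul, hx, hy, hsm]
  have hmemJ : ∀ a : R, ((x + a • y : maximalIdeal R) : R) ∈ J a := fun a =>
    le_sup_right (α := Ideal R) (Ideal.subset_span rfl)
  have hmemJy : (y : R) ∈ Jy := le_sup_right (α := Ideal R) (Ideal.subset_span rfl)
  -- from membership in J a, get cotangent relation
  have keyJ : ∀ (a : R) (z : maximalIdeal R), (z : R) ∈ J a →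
      ∃ c : k, π z = c • v₀ + (c * IsLocalRing.residue R a) • v₁ := by
    intro a z hz
    obtain ⟨c, hc⟩ := key (x + a • y) z hz
    refine ⟨c, ?_⟩
    rw [hc, hπw, smul_add, smul_smul]
  have keyJy : ∀ z : maximalIdeal R, (z : R) ∈ Jy → ∃ c : k, π z = c • v₁ := by
    intro z hz
    obtain ⟨c, hc⟩ := key y z hz
    rw [hy] at hc
    exact ⟨c, hc⟩
  -- "y ∈ J a" is impossible
  have hyJ : ∀ a : R, (y : R) ∉ J a := by
    intro a hmem
    obtain ⟨c, hc⟩ := keyJ a y hmem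
    rw [hy] at hc
    have h0 : c • v₀ + (c * IsLocalRing.residue R a - 1) • v₁ = 0 := by
      calc c • v₀ + (c * IsLocalRing.residue R a - 1) • v₁
          = (c • v₀ + (c * IsLocalRing.residue R a) • v₁) - v₁ := by
            simp only [sub_smul, one_smul]; abel
        _ = 0 := by rw [← hc, sub_self]
    obtain ⟨hc0, hc1⟩ := hind _ _ h0
    rw [hc0, zero_mul, zero_sub, neg_eq_zero] at hc1
    exact one_ne_zero hc1
  -- "x ∈ Jy" is impossible
  have hxJy : (x : R) ∉ Jy := by
    intro hmem
    obtain ⟨c, hc⟩ := keyJy x hmem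
    rw [hx] at hc
    have h0 : (1 : k) • v₀ + (-c) • v₁ = 0 := by
      calc (1 : k) • v₀ + (-c) • v₁ = v₀ - c • v₁ := by
            rw [one_smul, neg_smul, sub_eq_add_neg]
        _ = 0 := by rw [hc, sub_self]
    exact one_ne_zero (hind _ _ h0).1
  -- distinctness of J's
  have hJinj : ∀ i j : ℕ, i < p → j < p → J ((i : ℕ) : R) = J ((j : ℕ) : R) → i = j := by
    intro i j hi hj hij
    have hmem : ((x + ((i : ℕ) : R) • y : maximalIdeal R) : R) ∈ J ((j : ℕ) : R) := by
      rw [← hij]; exact hmemJ _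
    obtain ⟨c, hc⟩ := keyJ _ _ hmem
    rw [hπw] at hc
    have h0 : (1 - c) • v₀ +
        (IsLocalRing.residue R ((i : ℕ) : R) - c * IsLocalRing.residue R ((j : ℕ) : R)) • v₁
          = 0 := by
      calc (1 - c) • v₀ +
          (IsLocalRing.residue R ((i : ℕ) : R) - c * IsLocalRing.residue R ((j : ℕ) : R)) • v₁
          = (v₀ + IsLocalRing.residue R ((i : ℕ) : R) • v₁) -
            (c • v₀ + (c * IsLocalRing.residue R ((j : ℕ) : R)) • v₁) := by
              simp only [sub_smul, one_smul]; abel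
        _ = 0 := by rw [hc, sub_self]
    obtain ⟨hc0, hc1⟩ := hind _ _ h0
    have hc1' : IsLocalRing.residue R ((i : ℕ) : R) = IsLocalRing.residue R ((j : ℕ) : R) := by
      have : c = 1 := by linear_combination -hc0
      rw [this, one_mul] at hc1
      linear_combination hc1
    have hcast : ((i : ℕ) : k) = ((j : ℕ) : k) := by
      simpa [map_natCast] using hc1'
    exact CharP.natCast_injOn_Iio k p hi hj hcast
  have hJJy : ∀ a : R, J a ≠ Jy := by
    intro a h
    apply hyJ a
    rw [h]
    exact hmemJy
  have hJm : ∀ a : R, J a ≠ maximalIdeal R := by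
    intro a h
    apply hyJ a
    rw [h]
    exact y.2
  have hJym : Jy ≠ maximalIdeal R := by
    intro h
    apply hxJy
    rw [h]
    exact x.2
  -- nontriviality
  have hJbot : ∀ a : R, J a ≠ ⊥ := by
    intro a h
    have hz : ((x + a • y : maximalIdeal R) : R) = 0 := by
      have := hmemJ a
      rw [h] at this
      simpa using this
    have hz' : (x + a • y : maximalIdeal R) = 0 := ZeroMemClass.coe_eq_zero.mp hz
    have : v₀ + IsLocalRing.residue R a • v₁ = 0 := by rw [← hπw a, hz', map_zero]
    have h0 : (1 : k) • v₀ + IsLocalRing.residue R a • v₁ = 0 := by rwa [one_smul]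
    exact one_ne_zero (hind _ _ h0).1
  have hJybot : Jy ≠ ⊥ := by
    intro h
    have hz : (y : R) = 0 := by
      have := hmemJy
      rw [h] at this
      simpa using this
    have hz' : y = 0 := ZeroMemClass.coe_eq_zero.mp hz
    have h0 : (0 : k) • v₀ + (1 : k) • v₁ = 0 := by
      rw [zero_smul, zero_add, one_smul, ← hy, hz', map_zero]
    exact one_ne_zero (hind _ _ h0).2
  have hmbot : maximalIdeal R ≠ ⊥ := by
    intro h
    have hz : (x : R) = 0 := (Submodule.mem_bot R).mp (h.le x.2)
    have hz' : x = 0 := ZeroMemClass.coe_eq_zero.mp hz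
    have h0 : (1 : k) • v₀ + (0 : k) • v₁ = 0 := by
      rw [zero_smul, add_zero, one_smul, ← hx, hz', map_zero]
    exact one_ne_zero (hind _ _ h0).1
  have hmtop : maximalIdeal R ≠ ⊤ := (maximalIdeal.isMaximal R).ne_top
  have hJle : ∀ a : R, J a ≤ maximalIdeal R := by
    intro a
    refine sup_le (Ideal.pow_le_self two_ne_zero) ?_
    rw [Ideal.span_le, Set.singleton_subset_iff]
    exact (x + a • y).2
  have hJyle : Jy ≤ maximalIdeal R := by
    refine sup_le (Ideal.pow_le_self two_ne_zero) ?_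
    rw [Ideal.span_le, Set.singleton_subset_iff]
    exact y.2
  have hJtop : ∀ a : R, J a ≠ ⊤ := fun a h => hmtop (top_le_iff.mp (h ▸ hJle a))
  have hJytop : Jy ≠ ⊤ := fun h => hmtop (top_le_iff.mp (h ▸ hJyle))
  -- the injection
  set F : Fin (p + 2) → Ideal R := fun i =>
    if (i : ℕ) < p then J (((i : ℕ) : ℕ) : R)
    else if (i : ℕ) = p then Jy
    else maximalIdeal R with hF
  have hFnt : ∀ i, F i ≠ ⊥ ∧ F i ≠ ⊤ := by
    intro i
    rw [hF]
    dsimp only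
    split_ifs with h1 h2
    · exact ⟨hJbot _, hJtop _⟩
    · exact ⟨hJybot, hJytop⟩
    · exact ⟨hmbot, hmtop⟩
  have hFinj : Function.Injective F := by
    intro i j hij
    rw [hF] at hij
    dsimp only at hij
    apply Fin.ext
    have hi := i.isLt
    have hj := j.isLt
    split_ifs at hij with h1 h2 h3 h4 h5 h6 h7 h8
    · exact hJinj _ _ h1 h2 hij
    · exact absurd hij (hJJy _)
    · exact absurd hij (hJm _)
    · exact absurd hij.symm (hJJy _)
    · omega
    · exact absurd hij hJym
    · exact absurd hij.symm (hJm _)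
    · exact absurd hij.symm hJym
    · omega
  let f : Fin (p + 2) → {I : Ideal R // I ≠ ⊥ ∧ I ≠ ⊤} := fun i => ⟨F i, hFnt i⟩
  have hfinj : Function.Injective f := by
    intro i j hij
    exact hFinj (congrArg Subtype.val hij)
  have hle2 : p + 2 ≤ Nat.card {I : Ideal R // I ≠ ⊥ ∧ I ≠ ⊤} := by
    have := Nat.card_le_card_of_injective f hfinj
    simpa using this
  rw [hcard] at hle2
  omega
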